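/- arXiv:1205.1730 — 3 statements merged into one kernel-verified Lean document; each statement's English description precedes it below -/
import Mathlib

section
/- Let L be the linear functional on ℚ[x] with L(x^n) = |E_n| (the absolute values of the Euler numbers), and define s_m(x) by s_0 = 1, s_1 = x, s_{m+1} = x·s_m − m²·s_{m−1}. Then for all m ≠ k, L(s_m · s_k) = 0; that is, the s_m form an orthogonal polynomial sequence for the moment sequence |E_n|. -/
/-- The Euler numbers `E_n`, defined as `n!` times the `n`-th Taylor coefficient at `0`
of `sech z = 1 / cosh z`. -/
noncomputable def eulerNumber (n : ℕ) : ℝ :=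
  iteratedDeriv n (fun x : ℝ => (Real.cosh x)⁻¹) 0

/-- The polynomial sequence `s_m ∈ ℚ[x]` defined by `s_0 = 1`, `s_1 = x`,
`s_{m+1} = x·s_m − m²·s_{m−1}`. -/
noncomputable def sPoly : ℕ → Polynomial ℚ
  | 0 => 1
  | 1 => Polynomial.X
  | (m + 2) => Polynomial.X * sPoly (m + 1) - Polynomial.C ((m + 1 : ℚ) ^ 2) * sPoly m

/-- The moment functional `L : ℚ[x] → ℝ` with `L(x^n) = |E_n|`. -/
noncomputable def momentL (p : Polynomial ℚ) : ℝ :=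
  p.sum fun n c => (c : ℝ) * |eulerNumber n|

/-! ### Combinatorial arrays -/

/-- Nonnegative weighted path counts: `pA n k` is (k! times) the weighted number of
Dyck-type paths of length `n` from level 0 to level `k`. -/
def pA : ℕ → ℕ → ℚ
  | 0, 0 => 1
  | 0, _ + 1 => 0
  | n + 1, k => (k + 1) * pA n (k + 1) + k * pA n (k - 1)

/-- Signed version: the coefficients of the `n`-th derivative of `sech` in the basis
`sech·tanh^k`. -/
def pB : ℕ → ℕ → ℚ
  | 0, 0 => 1
  | 0, _ + 1 => 0
  | n + 1, k => (k + 1) * pB n (k + 1) - k * pB n (k - 1)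

lemma pA_rec (n k : ℕ) : pA (n + 1) k = (k + 1) * pA n (k + 1) + k * pA n (k - 1) := by
  rw [pA]

lemma pB_rec (n k : ℕ) : pB (n + 1) k = (k + 1) * pB n (k + 1) - k * pB n (k - 1) := by
  rw [pB]

lemma pA_nonneg (n k : ℕ) : 0 ≤ pA n k := by
  induction n generalizing k with
  | zero => cases k <;> simp [pA]
  | succ n ih =>
    rw [pA]
    exact add_nonneg (mul_nonneg (by positivity) (ih _)) (mul_nonneg (by positivity) (ih _))

lemma pA_eq_zero (n k : ℕ) (h : n < k) : pA n k = 0 := by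
  induction n generalizing k with
  | zero => obtain ⟨k, rfl⟩ := Nat.exists_eq_add_of_lt h; simp [pA]
  | succ n ih =>
    obtain ⟨k', rfl⟩ : ∃ k', k = k' + 1 := ⟨k - 1, by omega⟩
    rw [pA]
    simp only [Nat.add_sub_cancel]
    rw [ih (k' + 2) (by omega), ih k' (by omega)]
    ring

lemma pB_eq_zero (n k : ℕ) (h : n < k) : pB n k = 0 := by
  induction n generalizing k with
  | zero => obtain ⟨k, rfl⟩ := Nat.exists_eq_add_of_lt h; simp [pB]
  | succ n ih =>
    obtain ⟨k', rfl⟩ : ∃ k', k = k' + 1 := ⟨k - 1, by omega⟩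
    rw [pB]
    simp only [Nat.add_sub_cancel]
    rw [ih (k' + 2) (by omega), ih k' (by omega)]
    ring

lemma pB_eq_I_pow_mul (n k : ℕ) : (pB n k : ℂ) = Complex.I ^ (n + k) * pA n k := by
  induction n generalizing k with
  | zero => cases k with
    | zero => simp [pA, pB]
    | succ k => simp [pA, pB]
  | succ n ih =>
    cases k with
    | zero =>
      rw [pB, pA]
      push_cast
      rw [ih 1]
      ring
    | succ k =>
      rw [pB, pA]
      simp only [Nat.add_sub_cancel]
      push_cast
      rw [ih (k + 2), ih k]
      have h2 : Complex.I ^ (n + (k + 2)) = Complex.I ^ ((n + 1) + (k + 1)) := by ring_nf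
      have h3 : Complex.I ^ (n + k) = - Complex.I ^ ((n + 1) + (k + 1)) := by
        have e : (n + 1) + (k + 1) = (n + k) + 2 := by omega
        have e2 : Complex.I ^ ((n + k) + 2) = Complex.I ^ (n + k) * Complex.I ^ 2 :=
          pow_add _ _ _
        rw [e, e2, Complex.I_sq]; ring
      rw [h2, h3]
      ring

/-! ### Derivatives of sech -/

/-- `sech x · tanh x ^ k`, written via `sinh` and `cosh`. -/
noncomputable def gfun (k : ℕ) (x : ℝ) : ℝ := Real.sinh x ^ k * ((Real.cosh x)⁻¹) ^ (k + 1)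

lemma hasDerivAt_gfun (k : ℕ) (x : ℝ) :
    HasDerivAt (gfun k)
      ((k : ℝ) * gfun (k - 1) x - ((k : ℝ) + 1) * gfun (k + 1) x) x := by
  have hc : Real.cosh x ≠ 0 := (Real.cosh_pos (x := x)).ne'
  have h1 : HasDerivAt (fun x => Real.sinh x ^ k)
      ((k : ℝ) * Real.sinh x ^ (k - 1) * Real.cosh x) x :=
    (Real.hasDerivAt_sinh x).pow k
  have h2 : HasDerivAt (fun x => ((Real.cosh x)⁻¹) ^ (k + 1))
      (((k : ℝ) + 1) * ((Real.cosh x)⁻¹) ^ k * (-Real.sinh x / Real.cosh x ^ 2)) x := by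
    have := ((Real.hasDerivAt_cosh x).inv hc).pow (k + 1)
    refine this.congr_deriv ?_
    push_cast
    simp
  have h := h1.mul h2
  refine h.congr_deriv ?_
  symm
  unfold gfun
  cases k with
  | zero => simp; field_simp
  | succ k =>
    simp only [Nat.add_sub_cancel, inv_pow]
    push_cast
    field_simp
    ring

lemma key_sum (G : ℕ → ℝ) (n : ℕ) :
    ∑ k ∈ Finset.range (n + 1), (pB n k : ℝ) * ((k : ℝ) * G (k - 1) - ((k : ℝ) + 1) * G (k + 1))
      = ∑ k ∈ Finset.range (n + 2), (pB (n + 1) k : ℝ) * G k := by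
  have hrhs : ∑ k ∈ Finset.range (n + 2), (pB (n + 1) k : ℝ) * G k
      = (∑ k ∈ Finset.range (n + 2), ((k : ℝ) + 1) * (pB n (k + 1) : ℝ) * G k)
        - ∑ k ∈ Finset.range (n + 2), (k : ℝ) * (pB n (k - 1) : ℝ) * G k := by
    rw [← Finset.sum_sub_distrib]
    refine Finset.sum_congr rfl fun k _ => ?_
    rw [pB_rec]
    push_cast
    ring
  have hA : ∑ k ∈ Finset.range (n + 2), ((k : ℝ) + 1) * (pB n (k + 1) : ℝ) * G k
      = ∑ k ∈ Finset.range (n + 1), (pB n k : ℝ) * ((k : ℝ) * G (k - 1)) := by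
    rw [Finset.sum_range_succ, pB_eq_zero n (n + 2) (by omega)]
    rw [Finset.sum_range_succ, pB_eq_zero n (n + 1) (by omega)]
    simp only [Rat.cast_zero, mul_zero, zero_mul, add_zero]
    rw [Finset.sum_range_succ' (fun k => (pB n k : ℝ) * ((k : ℝ) * G (k - 1))) n]
    norm_num
    refine Finset.sum_congr rfl fun k _ => ?_
    ring
  have hB : ∑ k ∈ Finset.range (n + 2), (k : ℝ) * (pB n (k - 1) : ℝ) * G k
      = ∑ k ∈ Finset.range (n + 1), (pB n k : ℝ) * (((k : ℝ) + 1) * G (k + 1)) := by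
    rw [Finset.sum_range_succ' (fun k => (k : ℝ) * (pB n (k - 1) : ℝ) * G k) (n + 1)]
    norm_num
    refine Finset.sum_congr rfl fun k _ => ?_
    ring
  rw [hrhs, hA, hB, ← Finset.sum_sub_distrib]
  refine Finset.sum_congr rfl fun k _ => ?_
  ring

lemma iteratedDeriv_sech (n : ℕ) :
    iteratedDeriv n (fun x : ℝ => (Real.cosh x)⁻¹)
      = fun x => ∑ k ∈ Finset.range (n + 1), (pB n k : ℝ) * gfun k x := by
  induction n with
  | zero =>
    simp only [iteratedDeriv_zero]
    funext x
    simp [gfun, pB]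
  | succ n ih =>
    rw [iteratedDeriv_succ, ih]
    funext x
    have H : HasDerivAt (fun x => ∑ k ∈ Finset.range (n + 1), (pB n k : ℝ) * gfun k x)
        (∑ k ∈ Finset.range (n + 1),
          (pB n k : ℝ) * ((k : ℝ) * gfun (k - 1) x - ((k : ℝ) + 1) * gfun (k + 1) x)) x :=
      by
        exact HasDerivAt.fun_sum (u := Finset.range (n + 1)) fun k _ => (hasDerivAt_gfun k x).const_mul (pB n k : ℝ)
    rw [H.deriv]
    exact key_sum (fun k => gfun k x) n

lemma eulerNumber_eq_pB (n : ℕ) : eulerNumber n = (pB n 0 : ℝ) := by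
  unfold eulerNumber
  rw [iteratedDeriv_sech]
  show ∑ k ∈ Finset.range (n + 1), (pB n k : ℝ) * gfun k 0 = (pB n 0 : ℝ)
  rw [Finset.sum_eq_single 0]
  · simp [gfun]
  · intro b _ hb
    simp [gfun, Real.sinh_zero, zero_pow hb]
  · intro h
    exact absurd (Finset.mem_range.mpr (by omega)) h

lemma abs_eulerNumber (n : ℕ) : |eulerNumber n| = ((pA n 0 : ℚ) : ℝ) := by
  rw [eulerNumber_eq_pB]
  have h := pB_eq_I_pow_mul n 0
  have h2 := congrArg (‖·‖) h
  rw [norm_mul, norm_pow, Complex.norm_I, one_pow, one_mul] at h2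
  rw [show ((pB n 0 : ℚ) : ℂ) = (((pB n 0 : ℚ) : ℝ) : ℂ) by push_cast; ring,
    show ((pA n 0 : ℚ) : ℂ) = (((pA n 0 : ℚ) : ℝ) : ℂ) by push_cast; ring,
    Complex.norm_real, Complex.norm_real, Real.norm_eq_abs, Real.norm_eq_abs] at h2
  rw [h2, abs_of_nonneg]
  exact_mod_cast pA_nonneg n 0

/-! ### The moment functional over ℚ -/

/-- The moment functional with moments `pA n 0`, as a `ℚ`-linear map. -/
noncomputable def LqL : Polynomial ℚ →ₗ[ℚ] ℚ :=
  Polynomial.lsum fun n => LinearMap.toSpanSingleton ℚ ℚ (pA n 0)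

lemma LqL_X_pow (j : ℕ) : LqL (Polynomial.X ^ j) = pA j 0 := by
  have : (Polynomial.X ^ j : Polynomial ℚ) = Polynomial.monomial j 1 := by
    rw [Polynomial.monomial_one_right_eq_X_pow]
  rw [this]
  show (Polynomial.monomial j (1 : ℚ)).sum (fun n r => r • pA n 0) = pA j 0
  rw [Polynomial.sum_monomial_index]
  · simp
  · simp

lemma LqL_X_pow_mul_sPoly : ∀ m j, LqL (Polynomial.X ^ j * sPoly m)
    = (m.factorial : ℚ) * pA j m := by
  intro m
  induction m using Nat.strong_induction_on with
  | _ m ih =>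
    match m with
    | 0 => intro j; simp [sPoly, LqL_X_pow]
    | 1 =>
      intro j
      rw [sPoly]
      rw [show Polynomial.X ^ j * Polynomial.X = Polynomial.X ^ (j + 1) by ring]
      rw [LqL_X_pow, pA_rec]
      norm_num
    | (m + 2) =>
      intro j
      rw [sPoly, mul_sub, ← mul_assoc, mul_comm (Polynomial.X ^ j) Polynomial.X,
        ← pow_succ',
        show Polynomial.X ^ j * (Polynomial.C ((m + 1 : ℚ) ^ 2) * sPoly m)
            = ((m + 1 : ℚ) ^ 2) • (Polynomial.X ^ j * sPoly m) by
          rw [Polynomial.smul_eq_C_mul]; ring,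
        map_sub, map_smul, ih (m + 1) (by omega) (j + 1), ih m (by omega) j]
      have h := pA_rec j (m + 1)
      simp only [Nat.add_sub_cancel] at h
      rw [h]
      rw [Nat.factorial_succ (m + 1), Nat.factorial_succ m]
      simp only [smul_eq_mul]
      push_cast
      ring_nf

lemma sPoly_natDegree_le : ∀ m, (sPoly m).natDegree ≤ m := by
  intro m
  induction m using Nat.strong_induction_on with
  | _ m ih =>
    match m with
    | 0 => simp [sPoly]
    | 1 => simp [sPoly]
    | (m + 2) =>
      rw [sPoly]
      refine le_trans (Polynomial.natDegree_sub_le _ _) (max_le ?_ ?_)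
      · refine le_trans (Polynomial.natDegree_mul_le) ?_
        have := ih (m + 1) (by omega)
        simp only [Polynomial.natDegree_X]
        omega
      · refine le_trans (Polynomial.natDegree_C_mul_le _ _) ?_
        have := ih m (by omega)
        omega

lemma LqL_sPoly_mul (m k : ℕ) (h : k < m) : LqL (sPoly m * sPoly k) = 0 := by
  have hdeg : (sPoly k).natDegree < m := lt_of_le_of_lt (sPoly_natDegree_le k) h
  conv_lhs => rw [Polynomial.as_sum_range' (sPoly k) m hdeg]
  rw [Finset.mul_sum, map_sum]
  refine Finset.sum_eq_zero fun j hj => ?_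
  rw [← Polynomial.C_mul_X_pow_eq_monomial, ← Polynomial.smul_eq_C_mul,
    mul_smul_comm, mul_comm, map_smul,
    LqL_X_pow_mul_sPoly, pA_eq_zero j m (Finset.mem_range.mp hj), mul_zero, smul_zero]

lemma momentL_eq (p : Polynomial ℚ) : momentL p = ((LqL p : ℚ) : ℝ) := by
  have h1 : LqL p = p.sum fun n c => c * pA n 0 := by
    simp [LqL, Polynomial.lsum_apply, LinearMap.toSpanSingleton_apply, smul_eq_mul]
  unfold momentL
  rw [h1, Polynomial.sum_def, Polynomial.sum_def, Rat.cast_sum]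
  refine Finset.sum_congr rfl fun n _ => ?_
  rw [abs_eulerNumber]
  push_cast
  ring

/-- The `s_m` form an orthogonal polynomial sequence for the moment sequence `|E_n|`:
for `m ≠ k` we have `L(s_m · s_k) = 0`. -/
theorem sPoly_orthogonal (m k : ℕ) (h : m ≠ k) : momentL (sPoly m * sPoly k) = 0 := by
  rw [momentL_eq]
  suffices h2 : LqL (sPoly m * sPoly k) = 0 by rw [h2]; norm_num
  rcases Nat.lt_or_gt_of_ne h with hlt | hlt
  · rw [mul_comm]; exact LqL_sPoly_mul k m hlt
  · exact LqL_sPoly_mul m k hlt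
end

section
/- For g = 0 and n = 2m+1 ≥ 3, the expression P_{0,n}(t) = [(1+t²)^n − 2^{n−1} t^{n−1}(1+t²)] / [(1−t²)(1−t⁴)] is a polynomial in t with nonnegative integer coefficients, of degree 2n−6, whose coefficients are symmetric (palindromic): the coefficient of t^d equals that of t^{2n−6−d}. -/
open Polynomial Finset

lemma hdeg2 : (1 + X^2 : ℤ[X]).natDegree = 2 := by compute_degree!

lemma refl_sum {R : Type*} [CommSemiring R] (N : ℕ) (s : Finset ℕ) (f : ℕ → R[X]) :
    reflect N (∑ i ∈ s, f i) = ∑ i ∈ s, reflect N (f i) := by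
  classical
  induction s using Finset.induction with
  | empty => simp [reflect_zero]
  | insert a s h ih => rw [Finset.sum_insert h, Finset.sum_insert h, reflect_add, ih]

lemma refl2 : reflect 2 (1 + X^2 : ℤ[X]) = 1 + X^2 := by
  have h : (1 + X^2 : ℤ[X]) = C 1 * X^0 + C 1 * X^2 := by simp
  rw [h, reflect_add, reflect_C_mul_X_pow, reflect_C_mul_X_pow]
  rw [revAt_le (by norm_num), revAt_le (by norm_num)]
  norm_num
  ring

lemma refl_pow_sq (k : ℕ) : reflect (2*k) ((1 + X^2 : ℤ[X])^k) = (1 + X^2)^k := by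
  induction k with
  | zero =>
    rw [Nat.mul_zero, pow_zero, ← C_1, reflect_C, pow_zero, mul_one]
  | succ k ih =>
    have hmul := reflect_mul ((1 + X^2 : ℤ[X])^k) (1 + X^2) (F := 2*k) (G := 2)
      (by rw [natDegree_pow, hdeg2]; ring_nf; exact le_rfl) (by rw [hdeg2])
    calc reflect (2*(k+1)) ((1 + X^2 : ℤ[X])^(k+1))
        = reflect (2*k+2) ((1 + X^2 : ℤ[X])^k * (1+X^2)) := by ring_nf
      _ = (1 + X^2 : ℤ[X])^k * (1+X^2) := by rw [hmul, ih, refl2]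
      _ = (1 + X^2 : ℤ[X])^(k+1) := by ring

/-- For `n = 2m+1 ≥ 3`, the expression
`P_{0,n}(t) = [(1+t²)^n − 2^{n−1} t^{n−1}(1+t²)] / [(1−t²)(1−t⁴)]`
is a polynomial with nonnegative integer coefficients, of degree `2n−6`, whose
coefficients are palindromic. -/
theorem Ppoly_genus_zero_palindromic (m : ℕ) (hm : 1 ≤ m) :
    ∃ p : Polynomial ℤ,
      (1 + X ^ 2) ^ (2 * m + 1) - 2 ^ (2 * m) * X ^ (2 * m) * (1 + X ^ 2) =
        p * ((1 - X ^ 2) * (1 - X ^ 4)) ∧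
      p.natDegree = 2 * (2 * m + 1) - 6 ∧
      (∀ d, 0 ≤ p.coeff d) ∧
      (∀ d ≤ 2 * (2 * m + 1) - 6, p.coeff d = p.coeff (2 * (2 * m + 1) - 6 - d)) := by
  set q : ℕ[X] := ∑ i ∈ Finset.range m, ((1 + X^2)^2)^i * (4 * X^2)^(m - 1 - i) with hq
  set p : ℤ[X] := q.map (Nat.castRingHom ℤ) with hp
  have hpform : p = ∑ i ∈ Finset.range m, ((1 + X^2 : ℤ[X])^2)^i * (4 * X^2)^(m - 1 - i) := by
    rw [hp, hq, Polynomial.map_sum]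
    refine Finset.sum_congr rfl fun i _ => ?_
    simp [Polynomial.map_pow, Polynomial.map_mul, Polynomial.map_add, Polynomial.map_one,
      Polynomial.map_ofNat]
  -- main identity
  have hgeom := geom_sum₂_mul ((1 + X^2 : ℤ[X])^2) (4 * X^2) m
  have hmain : (1 + X ^ 2 : ℤ[X]) ^ (2 * m + 1) - 2 ^ (2 * m) * X ^ (2 * m) * (1 + X ^ 2) =
      p * ((1 - X ^ 2) * (1 - X ^ 4)) := by
    rw [hpform]
    have h4 : (2 : ℤ[X]) ^ (2 * m) * X ^ (2 * m) = (4 * X^2)^m := by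
      rw [mul_pow, pow_mul, pow_mul]; norm_num
    have ha : (1 + X^2 : ℤ[X]) ^ (2*m+1) = ((1 + X^2)^2)^m * (1 + X^2) := by
      rw [← pow_mul, ← pow_succ]
    rw [ha, h4]
    linear_combination (-(1 + X^2) : ℤ[X]) * hgeom
  -- degree
  have hDdeg : ((1 - X ^ 2 : ℤ[X]) * (1 - X ^ 4)).natDegree = 6 := by compute_degree!
  have hNdeg : ((1 + X ^ 2 : ℤ[X]) ^ (2 * m + 1) - 2 ^ (2 * m) * X ^ (2 * m) * (1 + X ^ 2)).natDegree
      = 2 * (2 * m + 1) := by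
    have hA : ((1 + X ^ 2 : ℤ[X]) ^ (2 * m + 1)).natDegree = 2 * (2 * m + 1) := by
      rw [natDegree_pow, hdeg2]; ring
    have hB : ((2 : ℤ[X]) ^ (2 * m) * X ^ (2 * m) * (1 + X ^ 2)).natDegree ≤ 2 * m + 2 := by
      refine natDegree_mul_le.trans ?_
      have h1 : ((2 : ℤ[X]) ^ (2 * m) * X ^ (2 * m)).natDegree ≤ 2 * m :=
        natDegree_mul_le.trans (by simp [natDegree_pow, natDegree_X_pow, Polynomial.natDegree_ofNat])
      rw [hdeg2]
      omega
    rw [natDegree_sub_eq_left_of_natDegree_lt (by omega), hA]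
  have hDne : ((1 - X ^ 2 : ℤ[X]) * (1 - X ^ 4)) ≠ 0 := by
    intro h; rw [h] at hDdeg; simp at hDdeg
  have hNne : ((1 + X ^ 2 : ℤ[X]) ^ (2 * m + 1) - 2 ^ (2 * m) * X ^ (2 * m) * (1 + X ^ 2)) ≠ 0 := by
    intro h; rw [h] at hNdeg; simp at hNdeg
  have hpne : p ≠ 0 := by
    intro h; rw [hmain, h, zero_mul] at hNne; exact hNne rfl
  have hpdeg : p.natDegree = 2 * (2 * m + 1) - 6 := by
    have := hNdeg
    rw [hmain, natDegree_mul hpne hDne, hDdeg] at this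
    omega
  -- nonnegativity
  have hnonneg : ∀ d, 0 ≤ p.coeff d := by
    intro d
    rw [hp, Polynomial.coeff_map]
    exact Int.natCast_nonneg _
  -- palindromicity
  have hrefl : reflect (4 * m - 4) p = p := by
    rw [hpform, refl_sum]
    refine Finset.sum_congr rfl fun i hi => ?_
    rw [Finset.mem_range] at hi
    have hK : 4 * m - 4 = 2 * (2 * i) + 4 * (m - 1 - i) := by omega
    have hterm2 : ((4 : ℤ[X]) * X^2)^(m - 1 - i) = C (4^(m-1-i)) * X^(2*(m-1-i)) := by
      rw [C_pow, map_ofNat, mul_pow, pow_mul]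
    rw [hK]
    have hmul := reflect_mul (((1 + X^2 : ℤ[X])^2)^i) ((4 * X^2)^(m - 1 - i))
      (F := 2 * (2*i)) (G := 4 * (m - 1 - i))
      (by rw [natDegree_pow, natDegree_pow, hdeg2]; omega)
      (by rw [hterm2, natDegree_C_mul_X_pow _ _ (by positivity)]; omega)
    rw [hmul, ← pow_mul, refl_pow_sq (2*i), hterm2, reflect_C_mul_X_pow,
      revAt_le (by omega)]
    have h42 : 4 * (m - 1 - i) - 2 * (m - 1 - i) = 2 * (m - 1 - i) := by omega
    rw [h42, ← hterm2, pow_mul]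
  refine ⟨p, hmain, hpdeg, hnonneg, fun d hd => ?_⟩
  have hK : 2 * (2 * m + 1) - 6 = 4 * m - 4 := by omega
  rw [hK] at hd ⊢
  conv_lhs => rw [← hrefl]
  rw [coeff_reflect, revAt_le (by omega)]
end

section
/- Let L: ℚ[x] → ℚ be the linear functional with L(x^n) = |E_n| (absolute Euler numbers). Let s_m(x) be defined by s_0 = 1, s_1 = x, s_{m+1} = x s_m − m² s_{m−1}. Then L(s_m(x)·x^k) = 0 for all 0 ≤ k < m. -/
open Polynomial

/-! ### Algebraic operators -/

/-- minus-world operator: `D(sech·q(tanh)) = sech·(dmQ q)(tanh)`. -/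
noncomputable def dmQ (q : ℚ[X]) : ℚ[X] := (1 - X ^ 2) * derivative q - X * q
/-- plus-world operator: `D(sec·q(tan)) = sec·(dpQ q)(tan)`. -/
noncomputable def dpQ (q : ℚ[X]) : ℚ[X] := (1 + X ^ 2) * derivative q + X * q

noncomputable def qP (n : ℕ) : ℚ[X] := dmQ^[n] 1
noncomputable def pP (n : ℕ) : ℚ[X] := dpQ^[n] 1

lemma qP_succ (n : ℕ) : qP (n + 1) = dmQ (qP n) := Function.iterate_succ_apply' _ _ _
lemma pP_succ (n : ℕ) : pP (n + 1) = dpQ (pP n) := Function.iterate_succ_apply' _ _ _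

lemma dpQ_add (p q : ℚ[X]) : dpQ (p + q) = dpQ p + dpQ q := by
  simp [dpQ]; ring

lemma dpQ_C_mul (c : ℚ) (p : ℚ[X]) : dpQ (C c * p) = C c * dpQ p := by
  simp [dpQ, derivative_C_mul]; ring

lemma dpQ_iterate_C_mul (k : ℕ) (c : ℚ) (p : ℚ[X]) :
    dpQ^[k] (C c * p) = C c * dpQ^[k] p := by
  induction k generalizing p with
  | zero => simp
  | succ k ih => rw [Function.iterate_succ_apply, Function.iterate_succ_apply, dpQ_C_mul, ih]

/-! ### Transfer map -/

noncomputable def Tmap (p : ℚ[X]) : ℚ[X] := p.sum fun n c => C c * pP n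

lemma Tmap_add (p q : ℚ[X]) : Tmap (p + q) = Tmap p + Tmap q := by
  unfold Tmap
  rw [Polynomial.sum_add_index] <;> intros <;> simp [add_mul]

lemma Tmap_C_mul (c : ℚ) (p : ℚ[X]) : Tmap (C c * p) = C c * Tmap p := by
  unfold Tmap
  rw [← smul_eq_C_mul]
  rw [Polynomial.sum_smul_index p c _ (fun i => by simp)]
  simp only [Polynomial.sum_def, Finset.mul_sum, C_mul, mul_assoc]

lemma Tmap_monomial (n : ℕ) (a : ℚ) : Tmap (monomial n a) = C a * pP n := by
  unfold Tmap
  exact Polynomial.sum_monomial_index a _ (by simp)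

lemma Tmap_X_mul (p : ℚ[X]) : Tmap (X * p) = dpQ (Tmap p) := by
  induction p using Polynomial.induction_on' with
  | add u v hu hv => rw [mul_add, Tmap_add, Tmap_add, hu, hv, dpQ_add]
  | monomial n a =>
      rw [Tmap_monomial, X_mul_monomial, Tmap_monomial, dpQ_C_mul, pP_succ]

lemma Tmap_X_pow_mul (k : ℕ) (p : ℚ[X]) : Tmap (X ^ k * p) = dpQ^[k] (Tmap p) := by
  induction k generalizing p with
  | zero => simp
  | succ k ih =>
      have h : X ^ (k + 1) * p = X ^ k * (X * p) := by ring
      rw [h, ih, Tmap_X_mul, Function.iterate_succ_apply]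

lemma Tmap_sub (p q : ℚ[X]) : Tmap (p - q) = Tmap p - Tmap q := by
  have hneg : Tmap (-q) = - Tmap q := by
    have h : -q = C (-1) * q := by simp
    rw [h, Tmap_C_mul]; simp
  rw [sub_eq_add_neg, Tmap_add, hneg, sub_eq_add_neg]

lemma dpQ_X_pow (n : ℕ) :
    dpQ (X ^ (n + 1)) = C ((n : ℚ) + 1) * X ^ n + (C ((n : ℚ) + 1) + 1) * X ^ (n + 2) := by
  unfold dpQ
  rw [derivative_X_pow]
  have h : n + 1 - 1 = n := rfl
  rw [h]
  push_cast
  ring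

lemma Tmap_sPoly : ∀ m, Tmap (sPoly m) = C (Nat.factorial m : ℚ) * X ^ m
  | 0 => by
      simp [sPoly, Nat.factorial]
      rw [show (1 : ℚ[X]) = monomial 0 1 by simp, Tmap_monomial]
      simp [pP]
  | 1 => by
      have h : Tmap X = C (1 : ℚ) * pP 1 := by
        rw [← monomial_one_one_eq_X]; exact Tmap_monomial 1 1
      have hp : pP 1 = X := by
        rw [pP_succ]; simp [pP, dpQ]
      simp [sPoly, h, hp, Nat.factorial]
  | (m + 2) => by
      rw [show sPoly (m + 2) = X * sPoly (m + 1) - C ((m + 1 : ℚ) ^ 2) * sPoly m from rfl]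
      rw [Tmap_sub, Tmap_C_mul, Tmap_X_mul, Tmap_sPoly (m + 1), Tmap_sPoly m]
      rw [dpQ_C_mul, dpQ_X_pow]
      have h1 : (Nat.factorial (m + 2) : ℚ) = ((m : ℚ) + 2) * (Nat.factorial (m + 1) : ℚ) := by
        rw [Nat.factorial_succ]; push_cast; ring
      have h2 : (Nat.factorial (m + 1) : ℚ) = ((m : ℚ) + 1) * (Nat.factorial m : ℚ) := by
        rw [Nat.factorial_succ]; push_cast; ring
      rw [h1, h2]
      simp only [C_add, C_mul, C_pow, C_1, map_ofNat]
      ring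

/-! ### Divisibility -/

lemma dpQ_dvd (a : ℕ) (q : ℚ[X]) (h : X ^ (a + 1) ∣ q) : X ^ a ∣ dpQ q := by
  obtain ⟨r, rfl⟩ := h
  refine ⟨(1 + X ^ 2) * (C ((a : ℚ) + 1) * r + X * derivative r) + X ^ 2 * r, ?_⟩
  unfold dpQ
  rw [derivative_mul, derivative_X_pow]
  have h : a + 1 - 1 = a := rfl
  rw [h]; push_cast; ring

lemma dpQ_iter_dvd (k : ℕ) : ∀ (a : ℕ) (q : ℚ[X]), X ^ (a + k) ∣ q → X ^ a ∣ dpQ^[k] q := by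
  induction k with
  | zero => intro a q h; simpa using h
  | succ k ih =>
      intro a q h
      rw [Function.iterate_succ_apply]
      exact ih a (dpQ q) (dpQ_dvd (a + k) q h)

/-! ### Analysis: derivatives of sech·q(tanh) -/

noncomputable def dmR (q : Polynomial ℝ) : Polynomial ℝ := (1 - X ^ 2) * derivative q - X * q

lemma map_dmQ (q : ℚ[X]) : (dmQ q).map (algebraMap ℚ ℝ) = dmR (q.map (algebraMap ℚ ℝ)) := by
  simp [dmQ, dmR, Polynomial.map_sub, Polynomial.map_mul, derivative_map, Polynomial.map_pow,
    Polynomial.map_one, Polynomial.map_X]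

lemma hasDerivAt_aux (q : Polynomial ℝ) (x : ℝ) :
    HasDerivAt (fun y => (Real.cosh y)⁻¹ * q.eval (Real.tanh y))
      ((Real.cosh x)⁻¹ * (dmR q).eval (Real.tanh x)) x := by
  have hc : Real.cosh x ≠ 0 := (Real.cosh_pos x).ne'
  have h1 : HasDerivAt (fun y => (Real.cosh y)⁻¹)
      (-Real.sinh x / Real.cosh x ^ 2) x := (Real.hasDerivAt_cosh x).inv hc
  have htanh : HasDerivAt Real.tanh
      ((Real.cosh x * Real.cosh x - Real.sinh x * Real.sinh x) / Real.cosh x ^ 2) x := by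
    have hdiv := (Real.hasDerivAt_sinh x).div (Real.hasDerivAt_cosh x) hc
    have hfun : (Real.sinh / Real.cosh) = Real.tanh := by
      funext y; rw [Pi.div_apply, Real.tanh_eq_sinh_div_cosh]
    rwa [hfun] at hdiv
  have htanh' : HasDerivAt Real.tanh ((Real.cosh x)⁻¹ ^ 2) x := by
    convert htanh using 1
    have hsq : Real.cosh x * Real.cosh x - Real.sinh x * Real.sinh x = 1 := by
      have := Real.cosh_sq_sub_sinh_sq x
      nlinarith [this]
    rw [hsq]
    field_simp
  have hq : HasDerivAt (fun y => q.eval (Real.tanh y))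
      (q.derivative.eval (Real.tanh x) * (Real.cosh x)⁻¹ ^ 2) x :=
    (q.hasDerivAt (Real.tanh x)).comp x htanh'
  have hmul := h1.mul hq
  refine hmul.congr_deriv ?_
  symm
  have ht2 : 1 - Real.tanh x ^ 2 = (Real.cosh x)⁻¹ ^ 2 := by
    rw [Real.tanh_eq_sinh_div_cosh]
    have h := Real.cosh_sq_sub_sinh_sq x
    field_simp
    linarith
  have hts : Real.tanh x = Real.sinh x / Real.cosh x := Real.tanh_eq_sinh_div_cosh x
  unfold dmR
  simp only [eval_sub, eval_mul, eval_one, eval_pow, eval_X]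
  rw [ht2]
  rw [hts]
  field_simp
  ring

lemma iteratedDeriv_aux (n : ℕ) (q : Polynomial ℝ) :
    iteratedDeriv n (fun y => (Real.cosh y)⁻¹ * q.eval (Real.tanh y)) =
      fun y => (Real.cosh y)⁻¹ * (dmR^[n] q).eval (Real.tanh y) := by
  induction n generalizing q with
  | zero => simp
  | succ n ih =>
      rw [iteratedDeriv_succ']
      have hder : deriv (fun y => (Real.cosh y)⁻¹ * q.eval (Real.tanh y)) =
          fun y => (Real.cosh y)⁻¹ * (dmR q).eval (Real.tanh y) :=
        funext fun y => (hasDerivAt_aux q y).deriv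
      rw [hder, ih, Function.iterate_succ_apply]

lemma map_qP (n : ℕ) : (qP n).map (algebraMap ℚ ℝ) = dmR^[n] 1 := by
  induction n with
  | zero => simp [qP]
  | succ n ih =>
      rw [qP_succ, map_dmQ, ih, Function.iterate_succ_apply']

lemma euler_eq (n : ℕ) : eulerNumber n = (((qP n).eval 0 : ℚ) : ℝ) := by
  have h0 : (fun x : ℝ => (Real.cosh x)⁻¹) =
      fun x => (Real.cosh x)⁻¹ * (1 : Polynomial ℝ).eval (Real.tanh x) := by
    funext x; simp
  rw [eulerNumber, h0, iteratedDeriv_aux]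
  simp only [Real.tanh_zero, Real.cosh_zero, inv_one, one_mul]
  rw [← map_qP, ← coeff_zero_eq_eval_zero, coeff_map, coeff_zero_eq_eval_zero,
    eq_ratCast (algebraMap ℚ ℝ)]

/-! ### Complex substitution relating `qP` and `pP` -/

lemma map_dmQ_C (q : ℚ[X]) : (dmQ q).map (algebraMap ℚ ℂ) =
    (1 - X ^ 2) * derivative (q.map (algebraMap ℚ ℂ)) - X * q.map (algebraMap ℚ ℂ) := by
  simp [dmQ, Polynomial.map_sub, Polynomial.map_mul, derivative_map, Polynomial.map_pow,
    Polynomial.map_one, Polynomial.map_X]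

lemma map_pP_succ (n : ℕ) : (pP (n + 1)).map (algebraMap ℚ ℂ) =
    (1 + X ^ 2) * derivative ((pP n).map (algebraMap ℚ ℂ)) + X * (pP n).map (algebraMap ℚ ℂ) := by
  rw [pP_succ]
  simp [dpQ, Polynomial.map_add, Polynomial.map_mul, derivative_map, Polynomial.map_pow,
    Polynomial.map_one, Polynomial.map_X]

lemma comp_relation (n : ℕ) :
    ((qP n).map (algebraMap ℚ ℂ)).comp (C Complex.I * X) =
      C ((-Complex.I) ^ n) * (pP n).map (algebraMap ℚ ℂ) := by
  induction n with
  | zero => simp [qP, pP]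
  | succ n ih =>
      set Q := (qP n).map (algebraMap ℚ ℂ) with hQ
      set P := (pP n).map (algebraMap ℚ ℂ) with hP
      set u : Polynomial ℂ := C Complex.I * X with hu
      -- derivative of the induction hypothesis
      have hder : C Complex.I * ((derivative Q).comp u) = C ((-Complex.I) ^ n) * derivative P := by
        have h := congrArg derivative ih
        have hdu : derivative u = C Complex.I := by rw [hu]; simp
        rw [derivative_comp, hdu, derivative_C_mul] at h
        exact h
      have hIinv : C (-Complex.I) * C Complex.I = 1 := by
        rw [← C_mul]; simp
      have hder' : (derivative Q).comp u = C (-Complex.I) * (C ((-Complex.I) ^ n) * derivative P) := by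
        calc (derivative Q).comp u
            = (C (-Complex.I) * C Complex.I) * (derivative Q).comp u := by rw [hIinv, one_mul]
          _ = C (-Complex.I) * (C Complex.I * (derivative Q).comp u) := by ring
          _ = C (-Complex.I) * (C ((-Complex.I) ^ n) * derivative P) := by rw [hder]
      have hmap : (qP (n + 1)).map (algebraMap ℚ ℂ) = (1 - X ^ 2) * derivative Q - X * Q := by
        rw [qP_succ, map_dmQ_C]
      have husq : u ^ 2 = -X ^ 2 := by
        rw [hu, mul_pow, ← C_pow, Complex.I_sq]
        simp
      rw [hmap, sub_comp, mul_comp, mul_comp, sub_comp, one_comp, pow_comp, X_comp,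
        husq, hder', ih, map_pP_succ]
      simp only [← hP]
      rw [pow_succ]
      simp only [C_mul, C_neg, C_pow, C_1]
      ring

lemma eval0_relation (n : ℕ) :
    (((qP n).eval 0 : ℚ) : ℂ) = (-Complex.I) ^ n * (((pP n).eval 0 : ℚ) : ℂ) := by
  have h := congrArg (eval 0) (comp_relation n)
  rw [eval_comp] at h
  simp only [eval_mul, eval_C, eval_X, mul_zero] at h
  rw [← coeff_zero_eq_eval_zero ((qP n).map (algebraMap ℚ ℂ)), coeff_map,
    ← coeff_zero_eq_eval_zero ((pP n).map (algebraMap ℚ ℂ)), coeff_map] at h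
  simpa [eq_ratCast (algebraMap ℚ ℂ), coeff_zero_eq_eval_zero] using h

/-! ### Nonnegativity of `pP` coefficients -/

lemma pP_coeff_nonneg (n : ℕ) : ∀ j, 0 ≤ (pP n).coeff j := by
  induction n with
  | zero =>
      intro j
      simp only [pP, Function.iterate_zero, id_eq, coeff_one]
      split <;> norm_num
  | succ n ih =>
      intro j
      rw [pP_succ]
      have hd : dpQ (pP n) = derivative (pP n) + derivative (pP n) * X ^ 2 + pP n * X ^ 1 := by
        unfold dpQ; ring
      rw [hd]
      simp only [coeff_add, coeff_mul_X_pow']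
      have h1 : 0 ≤ (derivative (pP n)).coeff j := by
        rw [coeff_derivative]
        exact mul_nonneg (ih _) (by positivity)
      have h2 : 0 ≤ (if 2 ≤ j then (derivative (pP n)).coeff (j - 2) else 0) := by
        split
        · rw [coeff_derivative]; exact mul_nonneg (ih _) (by positivity)
        · exact le_rfl
      have h3 : 0 ≤ (if 1 ≤ j then (pP n).coeff (j - 1) else 0) := by
        split
        · exact ih _
        · exact le_rfl
      exact add_nonneg (add_nonneg h1 h2) h3

/-! ### `|E_n| = pP n (0)` -/

lemma euler_abs (n : ℕ) : |eulerNumber n| = (((pP n).eval 0 : ℚ) : ℝ) := by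
  rw [euler_eq, ← Rat.cast_abs]
  congr 1
  set q0 := (qP n).eval 0 with hq0
  set p0 := (pP n).eval 0 with hp0
  have hp0nn : 0 ≤ p0 := by
    rw [hp0, ← coeff_zero_eq_eval_zero]; exact pP_coeff_nonneg n 0
  have hrel := eval0_relation n
  rcases Nat.even_or_odd n with ⟨j, hj⟩ | ⟨j, hj⟩
  · -- even case
    have hn : n = 2 * j := by omega
    have hpow : (-Complex.I) ^ n = ((-1 : ℚ) ^ j : ℂ) := by
      rw [hn, pow_mul]
      norm_num [Complex.I_sq]
    rw [hpow] at hrel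
    have : q0 = (-1) ^ j * p0 := by exact_mod_cast hrel
    rw [this, abs_mul, abs_pow, abs_neg, abs_one, one_pow, one_mul, abs_of_nonneg hp0nn]
  · -- odd case
    have hn : n = 2 * j + 1 := by omega
    have hpow : (-Complex.I) ^ n = (-1 : ℂ) ^ j * -Complex.I := by
      rw [hn, pow_succ, pow_mul]
      norm_num [Complex.I_sq]
    rw [hpow] at hrel
    have hsq : ((q0 : ℂ)) ^ 2 = -((p0 : ℂ)) ^ 2 := by
      rw [hrel]
      have h1 : ((-1 : ℂ) ^ j) ^ 2 = 1 := by
        rw [← pow_mul, mul_comm, pow_mul]; norm_num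
      have h2 : (-Complex.I) ^ 2 = -1 := by
        norm_num [Complex.I_sq]
      rw [mul_pow, mul_pow, h1, one_mul, h2]
      ring
    have hq2 : q0 ^ 2 = -(p0 ^ 2) := by exact_mod_cast hsq
    have hq0z : q0 = 0 := by nlinarith [sq_nonneg q0, sq_nonneg p0]
    have hp0z : p0 = 0 := by nlinarith [sq_nonneg q0, sq_nonneg p0]
    rw [hq0z, hp0z, abs_zero]

/-! ### Final assembly -/

lemma momentL_eq_s17 (p : ℚ[X]) : momentL p = (((Tmap p).eval 0 : ℚ) : ℝ) := by
  unfold momentL Tmap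
  rw [Polynomial.sum_def, Polynomial.sum_def, eval_finset_sum]
  push_cast
  refine Finset.sum_congr rfl fun n _ => ?_
  rw [euler_abs n]
  rw [eval_mul, eval_C]
  push_cast
  ring

/-- `L(s_m(x)·x^k) = 0` for all `0 ≤ k < m`. -/
theorem sPoly_orthogonal_monomials (m k : ℕ) (hk : k < m) :
    momentL (sPoly m * Polynomial.X ^ k) = 0 := by
  rw [momentL_eq_s17]
  have h1 : sPoly m * X ^ k = X ^ k * sPoly m := mul_comm _ _
  rw [h1, Tmap_X_pow_mul, Tmap_sPoly, dpQ_iterate_C_mul]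
  have hdvd : X ^ 1 ∣ dpQ^[k] (X ^ m : ℚ[X]) := by
    refine dpQ_iter_dvd k 1 _ ?_
    exact pow_dvd_pow X (by omega)
  obtain ⟨r, hr⟩ := hdvd
  rw [hr]
  simp
end
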